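/- arXiv:0802.2079 — 2 statements merged into one kernel-verified Lean document; each statement's English description precedes it below -/
import Mathlib

section
/- Let k be an algebraically closed field of characteristic zero, let γ*: k[[x_1,…,x_n]] → k[[t]] be a nonzero local k-algebra homomorphism with image A, and suppose the normalization Ã of A inside Frac(A) ⊆ k((t)) equals k[[φ]] for some φ ∈ k[[t]]. Let d be the gcd of the set {ord_t γ*(f) : f ∈ k[[x_1,…,x_n]], 0 < ord_t γ*(f) < ∞}. Then d = ord_t(φ). In particular, the valuation ord_γ = ord_t ∘ γ* is normalized (d = 1) if and only if ord_t(φ) = 1. -/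
/-- Substitution of a power series `φ` with zero constant term into a power series `f`:
the image of `f` under the continuous `k`-algebra map `k[[s]] → k[[t]]`, `s ↦ φ`. -/
noncomputable def substPS {k : Type*} [CommRing k] (φ f : PowerSeries k) : PowerSeries k :=
  PowerSeries.mk fun m =>
    ∑ n ∈ Finset.range (m + 1), PowerSeries.coeff (R := k) n f * PowerSeries.coeff (R := k) m (φ ^ n)

/-- Substitution of power series `g i` (each with zero constant term) for the variables of a
multivariate power series `ψ`: the image of `ψ` under the continuous `k`-algebra map
`k[[x_1,…,x_n]] → k[[t]]`, `x_i ↦ g i`. -/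
noncomputable def mvSubst {k : Type*} [CommRing k] {n : ℕ} (g : Fin n → PowerSeries k)
    (ψ : MvPowerSeries (Fin n) k) : PowerSeries k :=
  PowerSeries.mk fun m => PowerSeries.coeff (R := k) m
    (MvPolynomial.aeval g (MvPowerSeries.trunc k (Finsupp.equivFunOnFinite.symm fun _ => m + 1) ψ))

/-- The single-variable power series `P`, viewed as a multivariate power series in the
first variable `x_1` (index `0`): this is `P(x_1)`. -/
noncomputable def embedX0 {k : Type*} [CommRing k] {n : ℕ} [NeZero n] (P : PowerSeries k) :
    MvPowerSeries (Fin n) k :=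
  fun d => if d = Finsupp.single 0 (d 0) then PowerSeries.coeff (R := k) (d 0) P else 0

lemma substPS_X {k : Type*} [CommRing k] (φ : PowerSeries k)
    (hφc : PowerSeries.constantCoeff (R := k) φ = 0) : substPS φ PowerSeries.X = φ := by
  ext m
  simp only [substPS, PowerSeries.coeff_mk, PowerSeries.coeff_X]
  rw [Finset.sum_eq_single 1]
  · cases m with
    | zero => simp [← hφc, ← PowerSeries.coeff_zero_eq_constantCoeff]
    | succ m => simp
  · intro b _ hb; simp [hb]
  · intro h
    rw [Finset.mem_range, not_lt] at h
    have hm : m = 0 := by omega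
    subst hm
    simp [pow_one, ← hφc, ← PowerSeries.coeff_zero_eq_constantCoeff]

lemma order_pow' {k : Type*} [CommRing k] [IsDomain k] (φ : PowerSeries k) (r : ℕ) :
    (φ ^ r).order = r * φ.order := by
  induction r with
  | zero => simp [PowerSeries.order_one]
  | succ r ih =>
    rw [pow_succ, PowerSeries.order_mul, ih]
    push_cast
    ring

lemma order_substPS {k : Type*} [CommRing k] [IsDomain k] (φ f : PowerSeries k)
    {N r : ℕ} (hN : φ.order = N) (hNpos : 0 < N) (hr : f.order = r) :
    (substPS φ f).order = (N * r : ℕ) := by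
  have hpow : ∀ s : ℕ, (φ ^ s).order = (s * N : ℕ) := by
    intro s; rw [order_pow', hN]; push_cast; ring
  rw [PowerSeries.order_eq_nat]
  constructor
  · simp only [substPS, PowerSeries.coeff_mk]
    rw [Finset.sum_eq_single r]
    · exact mul_ne_zero (PowerSeries.order_eq_nat.1 hr).1
        (by rw [show N * r = r * N by ring]; exact (PowerSeries.order_eq_nat.1 (hpow r)).1)
    · intro b _ hb
      rcases lt_or_gt_of_ne hb with h | h
      · simp [(PowerSeries.order_eq_nat.1 hr).2 b h]
      · have : PowerSeries.coeff (R := k) (N * r) (φ ^ b) = 0 := by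
          apply PowerSeries.coeff_of_lt_order
          rw [hpow b]; exact_mod_cast by nlinarith
        simp [this]
    · intro h
      exfalso; apply h; rw [Finset.mem_range]; nlinarith
  · intro i hi
    simp only [substPS, PowerSeries.coeff_mk]
    apply Finset.sum_eq_zero
    intro b _
    rcases lt_or_ge b r with h | h
    · simp [(PowerSeries.order_eq_nat.1 hr).2 b h]
    · have : PowerSeries.coeff (R := k) i (φ ^ b) = 0 := by
        apply PowerSeries.coeff_of_lt_order
        rw [hpow b]; exact_mod_cast by nlinarith
      simp [this]

lemma substPS_zero {k : Type*} [CommRing k] (φ : PowerSeries k) : substPS φ 0 = 0 := by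
  ext m; simp [substPS]

/-- Let `γ* : k[[x_1,…,x_n]] → k[[t]]` be a nonzero (continuous) local
`k`-algebra homomorphism with image `A`, and suppose the normalization of `A` inside
`Frac(A) ⊆ k((t))` equals `k[[φ]]` (expressed by: `A ⊆ k[[φ]]`, every element of `k[[φ]]` is
integral over `A`, and every element of `k[[φ]]` is a ratio of elements of `A`).  Let `d` be
the gcd of the set `{ord_t γ*(f) : 0 < ord_t γ*(f) < ∞}`.  Then `d = ord_t(φ)`; here this is
expressed by saying `N = ord_t(φ)` satisfies the defining property of the gcd. -/
theorem gcd_of_orders_eq_order_of_uniformizer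
    (k : Type) [Field k] [IsAlgClosed k] [CharZero k] {n : ℕ} [NeZero n]
    (γ : MvPowerSeries (Fin n) k →ₐ[k] PowerSeries k)
    (hlocal : ∀ i, PowerSeries.constantCoeff (R := k) (γ (MvPowerSeries.X i)) = 0)
    (hcont : ∀ ψ, γ ψ = mvSubst (fun i => γ (MvPowerSeries.X i)) ψ)
    (hnz : ∃ i, γ (MvPowerSeries.X i) ≠ 0)
    (φ : PowerSeries k) (hφc : PowerSeries.constantCoeff (R := k) φ = 0)
    (hsub : ∀ ψ, ∃ f, substPS φ f = γ ψ)
    (hint : ∀ f, IsIntegral γ.range (substPS φ f))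
    (hfrac : ∀ f, ∃ ψ₁ ψ₂, γ ψ₂ ≠ 0 ∧ substPS φ f * γ ψ₂ = γ ψ₁)
    (N : ℕ) (hN : φ.order = N)
    (hne : ∃ (m : ℕ) (ψ : MvPowerSeries (Fin n) k), 0 < m ∧ (γ ψ).order = m) :
    (∀ (m : ℕ) (ψ : MvPowerSeries (Fin n) k), 0 < m → (γ ψ).order = m → N ∣ m) ∧
      (∀ d : ℕ, (∀ (m : ℕ) (ψ : MvPowerSeries (Fin n) k), 0 < m → (γ ψ).order = m → d ∣ m) →
        d ∣ N) := by
  have hNpos : 0 < N := by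
    rcases Nat.eq_zero_or_pos N with h0 | h
    · exfalso
      rw [h0] at hN
      have := (PowerSeries.order_eq_nat.1 (by exact_mod_cast hN)).1
      rw [PowerSeries.coeff_zero_eq_constantCoeff] at this
      exact this hφc
    · exact h
  constructor
  · -- N divides every order in the value semigroup
    intro m ψ hm hord
    obtain ⟨f, hf⟩ := hsub ψ
    have hγψ : γ ψ ≠ 0 := by
      intro h
      rw [h, PowerSeries.order_zero] at hord
      exact (ENat.top_ne_coe m) hord
    have hf0 : f ≠ 0 := by
      rintro rfl
      rw [substPS_zero] at hf
      exact hγψ hf.symm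
    have hford : f.order ≠ ⊤ := by
      simp only [ne_eq, PowerSeries.order_eq_top]; exact hf0
    lift f.order to ℕ using hford with r hr
    have := order_substPS φ f hN hNpos hr.symm
    rw [hf, hord] at this
    have hmr : m = N * r := by exact_mod_cast this
    exact ⟨r, hmr⟩
  · -- any common divisor d divides N
    intro d hd
    obtain ⟨ψ₁, ψ₂, hψ₂, heq⟩ := hfrac PowerSeries.X
    rw [substPS_X φ hφc] at heq
    have hord₂ : (γ ψ₂).order ≠ ⊤ := by
      simp only [ne_eq, PowerSeries.order_eq_top]; exact hψ₂
    lift (γ ψ₂).order to ℕ using hord₂ with m₂ hm₂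
    have hord₁ : (γ ψ₁).order = ((N + m₂ : ℕ) : ℕ∞) := by
      rw [← heq, PowerSeries.order_mul, hN, ← hm₂]
      push_cast
      ring
    rcases Nat.eq_zero_or_pos m₂ with h0 | hpos
    · have := hd (N + m₂) ψ₁ (by omega) hord₁
      simpa [h0] using this
    · have h1 := hd (N + m₂) ψ₁ (by omega) hord₁
      have h2 := hd m₂ ψ₂ hpos hm₂.symm
      have := Nat.dvd_sub h1 h2
      simpa using this
end

section
/- Let k be a field, let v: k[[x_1,…,x_n]] → Z_{≥0} ∪ {∞} be a valuation (satisfying v(c)=0 for c ∈ k*, v(0)=∞, v(fg)=v(f)+v(g), v(f+g) ≥ min(v(f),v(g))), and suppose P_2,…,P_n ∈ t·k[[t]] satisfy v(x_i − P_i(x_1)) = ∞ for 2 ≤ i ≤ n, and v(x_1) = 1. Then for every ψ ∈ k[[x_1,…,x_n]], v(ψ) = ord_t ψ(t, P_2(t), …, P_n(t)). -/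
namespace ValOrdAux

set_option linter.unusedSectionVars false

variable {k : Type} [Field k] {n : ℕ} [NeZero n]

lemma coeff_embedX0 (f : PowerSeries k) (d : Fin n →₀ ℕ) :
    MvPowerSeries.coeff (R := k) d (embedX0 f) =
      if d = Finsupp.single 0 (d 0) then PowerSeries.coeff (R := k) (d 0) f else 0 := rfl

lemma supp0 {d : Fin n →₀ ℕ} (h : ∀ j : Fin n, j ≠ 0 → d j = 0) :
    d = Finsupp.single 0 (d 0) := by
  ext j
  rcases eq_or_ne j 0 with rfl | hj
  · simp
  · rw [h j hj, Finsupp.single_apply, if_neg (fun hc => hj hc.symm)]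

lemma pair_supp {p q d : Fin n →₀ ℕ} (hpq : p + q = d) (hd : d = Finsupp.single 0 (d 0)) :
    p = Finsupp.single 0 (p 0) ∧ q = Finsupp.single 0 (q 0) := by
  have hz : ∀ j : Fin n, j ≠ 0 → p j = 0 ∧ q j = 0 := by
    intro j hj
    have h2 : (p + q) j = (Finsupp.single (0 : Fin n) (d 0)) j := by rw [hpq, ← hd]
    rw [Finsupp.add_apply, Finsupp.single_apply, if_neg (fun hc => hj hc.symm)] at h2
    constructor <;> omega
  exact ⟨supp0 fun j hj => (hz j hj).1, supp0 fun j hj => (hz j hj).2⟩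

/-- The ring homomorphism `k[[t]] → k[[x_1,…,x_n]]`, `t ↦ x_1`. -/
noncomputable def embHom : PowerSeries k →+* MvPowerSeries (Fin n) k where
  toFun := embedX0
  map_zero' := by ext d; simp [coeff_embedX0]
  map_add' f g := by
    ext d
    simp only [coeff_embedX0, map_add]
    split_ifs <;> simp
  map_one' := by
    ext d
    rw [coeff_embedX0, MvPowerSeries.coeff_one]
    by_cases h0 : d = 0
    · subst h0; simp
    · rw [if_neg h0]
      by_cases h1 : d = Finsupp.single 0 (d 0)
      · rw [if_pos h1, PowerSeries.coeff_one, if_neg]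
        intro hc
        exact h0 (by rw [h1, hc, Finsupp.single_zero])
      · rw [if_neg h1]
  map_mul' f g := by
    ext d
    rw [coeff_embedX0, MvPowerSeries.coeff_mul]
    by_cases h1 : d = Finsupp.single 0 (d 0)
    · rw [if_pos h1, PowerSeries.coeff_mul]
      symm
      refine Finset.sum_nbij' (i := fun p => (p.1 0, p.2 0))
        (j := fun p => (Finsupp.single 0 p.1, Finsupp.single 0 p.2)) ?_ ?_ ?_ ?_ ?_
      · intro p hp
        rw [Finset.HasAntidiagonal.mem_antidiagonal] at hp ⊢
        calc p.1 0 + p.2 0 = (p.1 + p.2) 0 := by simp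
        _ = d 0 := by rw [hp]
      · intro p hp
        rw [Finset.HasAntidiagonal.mem_antidiagonal] at hp ⊢
        rw [← Finsupp.single_add, hp, ← h1]
      · intro p hp
        rw [Finset.HasAntidiagonal.mem_antidiagonal] at hp
        obtain ⟨e1, e2⟩ := pair_supp hp h1
        rw [Prod.ext_iff]
        exact ⟨by simpa using e1.symm, by simpa using e2.symm⟩
      · intro p _; simp
      · intro p hp
        rw [Finset.HasAntidiagonal.mem_antidiagonal] at hp
        obtain ⟨e1, e2⟩ := pair_supp hp h1
        rw [coeff_embedX0, coeff_embedX0, if_pos e1, if_pos e2]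
    · rw [if_neg h1]
      symm
      apply Finset.sum_eq_zero
      intro p hp
      rw [Finset.HasAntidiagonal.mem_antidiagonal] at hp
      rw [coeff_embedX0, coeff_embedX0]
      by_cases e1 : p.1 = Finsupp.single 0 (p.1 0)
      · by_cases e2 : p.2 = Finsupp.single 0 (p.2 0)
        · exfalso
          apply h1
          conv_lhs => rw [← hp, e1, e2, ← Finsupp.single_add]
          congr 1
          rw [← hp]; simp
        · rw [if_neg e2, mul_zero]
      · rw [if_neg e1, zero_mul]

lemma embHom_apply (f : PowerSeries k) : (embHom f : MvPowerSeries (Fin n) k) = embedX0 f := rfl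

lemma embHom_X : (embHom (PowerSeries.X : PowerSeries k) : MvPowerSeries (Fin n) k)
    = MvPowerSeries.X 0 := by
  ext d
  rw [embHom_apply, coeff_embedX0, MvPowerSeries.coeff_X]
  by_cases h1 : d = Finsupp.single 0 (d 0)
  · rw [if_pos h1, PowerSeries.coeff_X]
    by_cases h2 : d 0 = 1
    · rw [if_pos h2, if_pos (by rw [h1, h2])]
    · rw [if_neg h2, if_neg]
      intro hc
      exact h2 (by rw [hc]; simp)
  · rw [if_neg h1, if_neg]
    intro hc
    exact h1 (by rw [hc]; simp)

lemma embHom_C (c : k) : (embHom (PowerSeries.C (R := k) c) : MvPowerSeries (Fin n) k)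
    = MvPowerSeries.C (σ := Fin n) (R := k) c := by
  ext d
  rw [embHom_apply, coeff_embedX0, MvPowerSeries.coeff_C]
  by_cases h0 : d = 0
  · subst h0; simp [PowerSeries.coeff_C]
  · rw [if_neg h0]
    by_cases h1 : d = Finsupp.single 0 (d 0)
    · rw [if_pos h1, PowerSeries.coeff_C, if_neg]
      intro hc
      exact h0 (by rw [h1, hc, Finsupp.single_zero])
    · rw [if_neg h1]

lemma degree_add {m : ℕ} (a b : Fin m →₀ ℕ) : (a+b).degree = a.degree + b.degree := by
  simp [Finsupp.degree_eq_weight_one]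

lemma degree_single {m : ℕ} (i : Fin m) (c : ℕ) : (Finsupp.single i c).degree = c := by
  simp [Finsupp.degree_eq_weight_one, Finsupp.weight_apply]

section Ord
variable (P : Fin n → PowerSeries k) (hPc : ∀ i, PowerSeries.constantCoeff (R := k) (P i) = 0)

include hPc

lemma ord_P_pow (i : Fin n) (e : ℕ) : (e : ℕ∞) ≤ (P i ^ e).order := by
  have h1 : (1:ℕ∞) ≤ (P i).order := by
    apply PowerSeries.nat_le_order (P i) 1
    intro j hj
    interval_cases j
    rw [PowerSeries.coeff_zero_eq_constantCoeff]
    exact hPc i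
  induction e with
  | zero => simp
  | succ e ih =>
    rw [pow_succ]
    refine le_trans ?_ (PowerSeries.le_order_mul _ _)
    rw [Nat.cast_add_one]
    exact add_le_add ih h1

lemma ord_P_prod (d : Fin n →₀ ℕ) (s : Finset (Fin n)) :
    ((∑ i ∈ s, d i : ℕ) : ℕ∞) ≤ (∏ i ∈ s, P i ^ d i).order := by
  induction s using Finset.cons_induction with
  | empty => simp
  | cons a s ha ih =>
    rw [Finset.sum_cons, Finset.prod_cons, Nat.cast_add]
    exact le_trans (add_le_add (ord_P_pow P hPc a (d a)) ih) (PowerSeries.le_order_mul _ _)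

lemma coeff_aeval_monomial_eq_zero (d : Fin n →₀ ℕ) (c : k) (m : ℕ) (hm : m < d.degree) :
    PowerSeries.coeff (R := k) m (MvPolynomial.aeval P (MvPolynomial.monomial d c)) = 0 := by
  rw [MvPolynomial.aeval_monomial]
  apply PowerSeries.coeff_of_lt_order
  have hord : ((d.degree : ℕ) : ℕ∞) ≤ (d.prod fun i e => P i ^ e).order := by
    rw [Finsupp.degree]
    exact ord_P_prod P hPc d d.support
  calc (m : ℕ∞) < (d.degree : ℕ∞) := by exact_mod_cast hm
  _ ≤ (d.prod fun i e => P i ^ e).order := hord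
  _ ≤ _ := by
      refine le_trans ?_ (PowerSeries.le_order_mul _ _)
      exact le_add_self
end Ord

section V
variable (v : MvPowerSeries (Fin n) k → ℕ∞)
  (hC : ∀ c : k, c ≠ 0 → v (MvPowerSeries.C (σ := Fin n) (R := k) c) = 0)
  (hzero : v 0 = ⊤)
  (hmul : ∀ x y, v (x * y) = v x + v y)
  (hadd : ∀ x y, min (v x) (v y) ≤ v (x + y))
  (hx1 : v (MvPowerSeries.X 0) = 1)

include hC hzero hmul hadd hx1

lemma v_one : v 1 = 0 := by
  have := hC 1 one_ne_zero
  rwa [map_one] at this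

lemma v_unit {u : MvPowerSeries (Fin n) k} (hu : IsUnit u) : v u = 0 := by
  obtain ⟨w, rfl⟩ := hu
  have h : v w.val + v w.inv = 0 := by rw [← hmul, w.val_inv, v_one v hC hzero hmul hadd hx1]
  exact (add_eq_zero.mp h).1

lemma v_emb (f : PowerSeries k) : v (embHom f) = f.order := by
  rcases eq_or_ne f 0 with rfl | hf
  · rw [map_zero, hzero, PowerSeries.order_zero]
  · set m := f.order.toNat with hm
    have hfact : f = PowerSeries.X ^ m * PowerSeries.divXPowOrder f :=
      (PowerSeries.X_pow_order_mul_divXPowOrder (f := f)).symm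
    set u := PowerSeries.divXPowOrder f with hu
    have hordm : ((m : ℕ) : ℕ∞) = f.order := ENat.coe_toNat (PowerSeries.order_finite_iff_ne_zero.mpr hf).ne
    have hXm : (PowerSeries.X ^ m * u).order = (m : ℕ∞) + u.order := by
      rw [PowerSeries.order_mul, PowerSeries.order_X_pow]
    have hord : u.order = 0 := by
      have : ((m:ℕ∞)) + u.order = (m:ℕ∞) := by
        rw [← hXm, ← hfact, hordm]
      exact WithTop.add_left_cancel (ENat.coe_ne_top m) (this.trans (add_zero _).symm)
    have hcu : PowerSeries.constantCoeff (R := k) u ≠ 0 := by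
      have := PowerSeries.order_eq_nat (φ := u) (n := 0)
      simp [hord] at this
      simpa using this
    have hvu : v (embHom u) = 0 := by
      refine v_unit v hC hzero hmul hadd hx1 ?_
      exact (IsUnit.map embHom (PowerSeries.isUnit_iff_constantCoeff.mpr (Ne.isUnit hcu)))
    have hvX : ∀ j : ℕ, v ((MvPowerSeries.X 0 : MvPowerSeries (Fin n) k) ^ j) = j := by
      intro j
      induction j with
      | zero => simpa using v_one v hC hzero hmul hadd hx1
      | succ j ih =>
        rw [pow_succ, hmul, ih, hx1]
        exact (Nat.cast_add_one j).symm
    calc v (embHom f) = v (embHom (PowerSeries.X ^ m * u)) := by rw [hfact]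
    _ = v ((MvPowerSeries.X 0 : MvPowerSeries (Fin n) k) ^ m * embHom u) := by
        rw [map_mul, map_pow, embHom_X]
    _ = (m : ℕ∞) + 0 := by rw [hmul, hvX, hvu]
    _ = f.order := by rw [add_zero, hordm]

lemma v_sum_ge {ι : Type} (c : ℕ∞) (s : Finset ι) (h : ι → MvPowerSeries (Fin n) k)
    (hc : ∀ i ∈ s, c ≤ v (h i)) : c ≤ v (∑ i ∈ s, h i) := by
  induction s using Finset.cons_induction with
  | empty => simp [hzero]
  | cons a s ha ih =>
    rw [Finset.sum_cons]
    refine le_trans ?_ (hadd _ _)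
    exact le_min (hc a (Finset.mem_cons_self a s))
      (ih fun i hi => hc i (Finset.mem_cons_of_mem hi))

lemma v_neg (a : MvPowerSeries (Fin n) k) : v (-a) = v a := by
  have hm1 : v (-1 : MvPowerSeries (Fin n) k) = 0 := by
    have h := hmul (-1 : MvPowerSeries (Fin n) k) (-1)
    rw [neg_one_mul, neg_neg, v_one v hC hzero hmul hadd hx1] at h
    exact (add_eq_zero.mp h.symm).1
  rw [← neg_one_mul, hmul, hm1, zero_add]

lemma vtop_add {a b : MvPowerSeries (Fin n) k} (ha : v a = ⊤) (hb : v b = ⊤) :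
    v (a + b) = ⊤ := by
  have := hadd a b
  rw [ha, hb] at this
  simpa using this

lemma v_add_right_top (a : MvPowerSeries (Fin n) k) {t : MvPowerSeries (Fin n) k}
    (ht : v t = ⊤) : v (a + t) = v a := by
  refine le_antisymm ?_ ?_
  · have h := hadd (a + t) (-t)
    rw [add_neg_cancel_right, v_neg v hC hzero hmul hadd hx1, ht] at h
    simpa using h
  · have h := hadd a t
    rw [ht] at h
    simpa using h

section WithX
variable (hX : ∀ i : Fin n, (1:ℕ∞) ≤ v (MvPowerSeries.X i))
include hX

lemma order_le_v (f : MvPowerSeries (Fin n) k) : f.order ≤ v f := by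
  have key : ∀ N : ℕ, ∀ f : MvPowerSeries (Fin n) k, (N:ℕ∞) ≤ f.order → (N:ℕ∞) ≤ v f := by
    intro N
    induction N with
    | zero => intro f _; simp
    | succ N ih =>
      intro f hford
      classical
      set g : Fin n → MvPowerSeries (Fin n) k := fun i d =>
        if ∀ j : Fin n, j < i → d j = 0 then
          MvPowerSeries.coeff (R := k) (d + Finsupp.single i 1) f else 0 with hg
      have coeff_g : ∀ i d, MvPowerSeries.coeff (R := k) d (g i) =
          if ∀ j : Fin n, j < i → d j = 0 then
            MvPowerSeries.coeff (R := k) (d + Finsupp.single i 1) f else 0 := fun _ _ => rfl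
      have hcf : ∀ d : Fin n →₀ ℕ, d.degree < N + 1 → MvPowerSeries.coeff (R := k) d f = 0 := by
        intro d hd
        exact MvPowerSeries.coeff_of_lt_order (lt_of_lt_of_le (by exact_mod_cast hd) hford)
      have hdecomp : f = ∑ i : Fin n, g i * MvPowerSeries.X i := by
        ext d
        rw [map_sum]
        have hterm : ∀ i : Fin n, MvPowerSeries.coeff (R := k) d (g i * MvPowerSeries.X i) =
            if 1 ≤ d i ∧ ∀ j : Fin n, j < i → d j = 0 then MvPowerSeries.coeff (R := k) d f else 0 := by
          intro i
          rw [MvPowerSeries.X_def, MvPowerSeries.coeff_mul_monomial, mul_one]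
          by_cases hle : Finsupp.single i 1 ≤ d
          · rw [if_pos hle, coeff_g]
            have hdi : 1 ≤ d i := Finsupp.single_le_iff.mp hle
            have happ : ∀ j : Fin n, j ≠ i → (d - Finsupp.single i 1 : Fin n →₀ ℕ) j = d j := by
              intro j hj
              rw [Finsupp.tsub_apply, Finsupp.single_apply, if_neg (fun e => hj e.symm),
                Nat.sub_zero]
            have hcond : (∀ j : Fin n, j < i → (d - Finsupp.single i 1 : Fin n →₀ ℕ) j = 0)
                ↔ (∀ j : Fin n, j < i → d j = 0) := by
              constructor <;> intro h j hj
              · rw [← happ j (ne_of_lt hj)]; exact h j hj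
              · rw [happ j (ne_of_lt hj)]; exact h j hj
            have hre : (d - Finsupp.single i 1) + Finsupp.single i 1 = d :=
              tsub_add_cancel_of_le hle
            by_cases hc2 : ∀ j : Fin n, j < i → d j = 0
            · rw [if_pos (hcond.mpr hc2), if_pos ⟨hdi, hc2⟩, hre]
            · rw [if_neg (fun hx => hc2 (hcond.mp hx)), if_neg (fun hx => hc2 hx.2)]
          · rw [if_neg hle, if_neg (fun hx => hle (Finsupp.single_le_iff.mpr hx.1))]
        rw [Finset.sum_congr rfl (fun i _ => hterm i)]
        by_cases hd0 : d = 0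
        · subst hd0
          rw [Finset.sum_eq_zero, hcf 0 (by simp [map_zero])]
          intro i _
          rw [if_neg]
          rintro ⟨h1, -⟩
          simp at h1
        · have hsupp : d.support.Nonempty := Finsupp.support_nonempty_iff.mpr hd0
          set i₀ := d.support.min' hsupp with hi₀
          have hmem : i₀ ∈ d.support := Finset.min'_mem _ _
          have hdi₀ : d i₀ ≠ 0 := Finsupp.mem_support_iff.mp hmem
          have hlt : ∀ j : Fin n, j < i₀ → d j = 0 := by
            intro j hj
            by_contra hne
            exact absurd (Finset.min'_le _ _ (Finsupp.mem_support_iff.mpr hne)) (not_le.mpr hj)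
          rw [Finset.sum_eq_single i₀]
          · rw [if_pos ⟨Nat.one_le_iff_ne_zero.mpr hdi₀, hlt⟩]
          · intro b _ hb
            rw [if_neg]
            rintro ⟨h1, h2⟩
            have hbmem : b ∈ d.support := Finsupp.mem_support_iff.mpr (by omega)
            have : i₀ ≤ b := Finset.min'_le _ _ hbmem
            have hib : i₀ < b := lt_of_le_of_ne this (fun e => hb e.symm)
            exact hdi₀ (h2 i₀ hib)
          · intro h; exact absurd (Finset.mem_univ i₀) h
      rw [hdecomp]
      apply v_sum_ge v hC hzero hmul hadd hx1
      intro i _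
      rw [hmul, Nat.cast_add_one]
      have h1 : (N:ℕ∞) ≤ v (g i) := by
        apply ih
        apply MvPowerSeries.nat_le_order
        intro d hd
        rw [coeff_g]
        by_cases hc2 : ∀ j : Fin n, j < i → d j = 0
        · rw [if_pos hc2]
          apply hcf
          rw [degree_add, degree_single]
          omega
        · rw [if_neg hc2]
      exact add_le_add h1 (hX i)
  rcases eq_or_ne f.order ⊤ with htop | hne
  · rw [htop]
    have hvtop : v f = ⊤ := by
      have h : ∀ N : ℕ, (N:ℕ∞) ≤ v f := by
        intro N
        exact key N f (by rw [htop]; exact le_top)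
      cases hv : v f with
      | top => rfl
      | coe m => exact absurd (hv ▸ h (m+1)) (by exact_mod_cast by omega)
    rw [hvtop]
  · obtain ⟨m, hm⟩ : ∃ m : ℕ, f.order = (m:ℕ∞) := by
      cases ho : f.order with
      | top => exact absurd ho hne
      | coe m => exact ⟨m, rfl⟩
    rw [hm]
    exact key m f (le_of_eq hm.symm)
end WithX

variable (P : Fin n → PowerSeries k) (hP0 : P 0 = PowerSeries.X)
  (hinf : ∀ i : Fin n, i ≠ 0 → v (MvPowerSeries.X i - embedX0 (P i)) = ⊤)

include hP0 hinf

lemma v_sub_emb_top (i : Fin n) :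
    v (MvPowerSeries.X i - embHom (P i)) = ⊤ := by
  rcases eq_or_ne i 0 with rfl | hi
  · rw [hP0, embHom_X, sub_self, hzero]
  · rw [embHom_apply]; exact hinf i hi

lemma v_poly_top (Q : MvPolynomial (Fin n) k) :
    v ((Q : MvPowerSeries (Fin n) k) - embHom (MvPolynomial.aeval P Q)) = ⊤ := by
  induction Q using MvPolynomial.induction_on with
  | C c =>
    rw [MvPolynomial.coe_C, MvPolynomial.aeval_C]
    have hal : (algebraMap k (PowerSeries k)) c = PowerSeries.C (R := k) c := rfl
    rw [hal, embHom_C, sub_self, hzero]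
  | add Q R ihQ ihR =>
    rw [MvPolynomial.coe_add, map_add, map_add, add_sub_add_comm]
    exact vtop_add v hC hzero hmul hadd hx1 ihQ ihR
  | mul_X Q i ih =>
    rw [MvPolynomial.coe_mul, MvPolynomial.coe_X, map_mul, map_mul, MvPolynomial.aeval_X]
    have hsplit : (Q : MvPowerSeries (Fin n) k) * MvPowerSeries.X i
        - embHom (MvPolynomial.aeval P Q) * embHom (P i)
        = (Q : MvPowerSeries (Fin n) k) * (MvPowerSeries.X i - embHom (P i))
          + ((Q : MvPowerSeries (Fin n) k) - embHom (MvPolynomial.aeval P Q)) * embHom (P i) := by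
      ring
    rw [hsplit]
    apply vtop_add v hC hzero hmul hadd hx1
    · rw [hmul, v_sub_emb_top v hC hzero hmul hadd hx1 P hP0 hinf i, add_top]
    · rw [hmul, ih, top_add]

end V
end ValOrdAux

/-- Let `v : k[[x_1,…,x_n]] → ℤ_{≥0} ∪ {∞}` be a valuation, and suppose
`P_2,…,P_n ∈ t·k[[t]]` satisfy `v(x_i − P_i(x_1)) = ∞` for `2 ≤ i ≤ n` and `v(x_1) = 1`.
Then for every `ψ`, `v(ψ) = ord_t ψ(t, P_2(t), …, P_n(t))`. -/
theorem valuation_eq_order_of_subst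
    (k : Type) [Field k] {n : ℕ} [NeZero n]
    (v : MvPowerSeries (Fin n) k → ℕ∞)
    (hC : ∀ c : k, c ≠ 0 → v (MvPowerSeries.C (σ := Fin n) (R := k) c) = 0)
    (hzero : v 0 = ⊤)
    (hmul : ∀ x y, v (x * y) = v x + v y)
    (hadd : ∀ x y, min (v x) (v y) ≤ v (x + y))
    (hnt : ∃ f, f ≠ 0 ∧ v f ≠ 0)
    (P : Fin n → PowerSeries k) (hP0 : P 0 = PowerSeries.X)
    (hPc : ∀ i, PowerSeries.constantCoeff (R := k) (P i) = 0)
    (hinf : ∀ i : Fin n, i ≠ 0 → v (MvPowerSeries.X i - embedX0 (P i)) = ⊤)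
    (hx1 : v (MvPowerSeries.X 0) = 1) :
    ∀ ψ, v ψ = (mvSubst P ψ).order := by
  classical
  intro ψ
  open ValOrdAux in
  -- order of `P i` is at least 1
  have hordP : ∀ i, (1:ℕ∞) ≤ (P i).order := by
    intro i
    apply PowerSeries.nat_le_order (P i) 1
    intro j hj
    interval_cases j
    rw [PowerSeries.coeff_zero_eq_constantCoeff]
    exact hPc i
  -- v (X i) ≥ 1 for all i
  have hX : ∀ i : Fin n, (1:ℕ∞) ≤ v (MvPowerSeries.X i) := by
    intro i
    rcases eq_or_ne i 0 with rfl | hi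
    · rw [hx1]
    · have hsum : (MvPowerSeries.X i - embHom (P i)) + embHom (P i)
          = (MvPowerSeries.X i : MvPowerSeries (Fin n) k) := sub_add_cancel _ _
      have h := hadd (MvPowerSeries.X i - embHom (P i)) (embHom (P i))
      rw [hsum, embHom_apply, hinf i hi] at h
      rw [← embHom_apply, v_emb v hC hzero hmul hadd hx1] at h
      refine le_trans ?_ h
      simp only [le_min_iff, le_top, true_and]
      exact hordP i
  set S := mvSubst P ψ with hS
  have coeff_S : ∀ m : ℕ, PowerSeries.coeff (R := k) m S = PowerSeries.coeff (R := k) m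
      (MvPolynomial.aeval P
        (MvPowerSeries.trunc k (Finsupp.equivFunOnFinite.symm fun _ => m + 1) ψ)) := by
    intro m
    rw [hS, mvSubst, PowerSeries.coeff_mk]
  -- the key claim : v (ψ - embHom S) = ⊤
  have hkey : v (ψ - embHom S) = ⊤ := by
    have hN : ∀ N : ℕ, (N:ℕ∞) ≤ v (ψ - embHom S) := by
      intro N
      set eN : Fin n →₀ ℕ := Finsupp.equivFunOnFinite.symm fun _ => N with heN
      have heN_apply : ∀ i, eN i = N := fun i => rfl
      set Q : MvPolynomial (Fin n) k := MvPowerSeries.trunc k eN ψ with hQ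
      have hdlt : ∀ d : Fin n →₀ ℕ, d.degree < N → d < eN := by
        intro d hd
        constructor
        · rw [Finsupp.le_def]
          intro i
          rw [heN_apply]
          exact lt_of_le_of_lt (Finsupp.le_degree i d) hd |>.le
        · intro hle
          have h0 := Finsupp.le_def.mp hle 0
          rw [heN_apply] at h0
          have := Finsupp.le_degree (0 : Fin n) d
          omega
      -- part 2 : ψ - Q has order ≥ N
      have h2 : (N:ℕ∞) ≤ v (ψ - (Q : MvPowerSeries (Fin n) k)) := by
        refine le_trans ?_ (order_le_v v hC hzero hmul hadd hx1 hX _)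
        apply MvPowerSeries.nat_le_order
        intro d hd
        rw [map_sub, MvPolynomial.coeff_coe, hQ, MvPowerSeries.coeff_trunc,
          if_pos (hdlt d hd), sub_self]
      -- part 3 : aeval P Q - S has order ≥ N
      have h3 : (N:ℕ∞) ≤ v (embHom (MvPolynomial.aeval P Q - S)) := by
        rw [v_emb v hC hzero hmul hadd hx1]
        apply PowerSeries.nat_le_order
        intro m hm
        rw [map_sub, coeff_S]
        set em : Fin n →₀ ℕ := Finsupp.equivFunOnFinite.symm fun _ => m + 1 with hem
        have hem_apply : ∀ i, em i = m + 1 := fun i => rfl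
        set Q' : MvPolynomial (Fin n) k := MvPowerSeries.trunc k em ψ with hQ'
        have hsupp : ∀ d : Fin n →₀ ℕ, d ∈ (Q - Q').support → m < d.degree := by
          intro d hdsupp
          by_contra hc
          push_neg at hc
          apply MvPolynomial.mem_support_iff.mp hdsupp
          have hlt1 : d < eN := hdlt d (lt_of_le_of_lt hc hm)
          have hlt2 : d < em := by
            constructor
            · rw [Finsupp.le_def]
              intro i
              rw [hem_apply]
              have := Finsupp.le_degree i d
              omega
            · intro hle
              have h0 := Finsupp.le_def.mp hle 0
              rw [hem_apply] at h0
              have := Finsupp.le_degree (0 : Fin n) d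
              omega
          rw [MvPolynomial.coeff_sub, hQ, hQ', MvPowerSeries.coeff_trunc,
            MvPowerSeries.coeff_trunc, if_pos hlt1, if_pos hlt2, sub_self]
        have haev : MvPolynomial.aeval P Q - MvPolynomial.aeval P Q'
            = MvPolynomial.aeval P (Q - Q') := (map_sub _ _ _).symm
        rw [← map_sub (PowerSeries.coeff (R := k) m), haev]
        conv_lhs => rw [MvPolynomial.as_sum (Q - Q')]
        rw [map_sum, map_sum]
        apply Finset.sum_eq_zero
        intro d hd
        exact coeff_aeval_monomial_eq_zero P hPc d _ m (hsupp d hd)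
      -- part 1 : polynomial part has v = ⊤
      have h1 : v ((Q : MvPowerSeries (Fin n) k) - embHom (MvPolynomial.aeval P Q)) = ⊤ :=
        v_poly_top v hC hzero hmul hadd hx1 P hP0 hinf Q
      have hsum : ψ - embHom S =
          ((Q : MvPowerSeries (Fin n) k) - embHom (MvPolynomial.aeval P Q))
          + (ψ - (Q : MvPowerSeries (Fin n) k))
          + embHom (MvPolynomial.aeval P Q - S) := by
        rw [map_sub]
        ring
      rw [hsum]
      refine le_trans ?_ (hadd _ _)
      refine le_min (le_trans ?_ (hadd _ _)) h3
      exact le_min (by rw [h1]; exact le_top) h2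
    cases hv : v (ψ - embHom S) with
    | top => rfl
    | coe m => exact absurd (hv ▸ hN (m+1)) (by exact_mod_cast by omega)
  -- conclude
  have : ψ = embHom S + (ψ - embHom S) := by ring
  rw [this, v_add_right_top v hC hzero hmul hadd hx1 _ hkey,
    v_emb v hC hzero hmul hadd hx1]
end
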